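/- Let P be a probability distribution on {1,...,M}, let L ≥ 1, and let U_L be the uniform distribution on {1,...,L}. The maximum fidelity over majorization conversions from P to U_L equals √(1/L) · (Σ_{j=1}^{J-1} √(P↓(j)) + √((L+1-J) · Σ_{i=J}^{M} P↓(i))), where J = max of {1} ∪ {2 ≤ j ≤ L : Σ_{i=j}^{M} P↓(i) / (L+1-j) < P↓(j-1)} and P↓ are the values of P sorted decreasingly. -/

import Mathlib

open scoped Classical

lemma sqrt_tangent {a b : ℝ} (ha : 0 < a) (hb : 0 ≤ b) :
    Real.sqrt b ≤ Real.sqrt a + (b - a) / (2 * Real.sqrt a) := by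
  have hsa : 0 < Real.sqrt a := Real.sqrt_pos.2 ha
  have h1 : Real.sqrt a * Real.sqrt a = a := Real.mul_self_sqrt ha.le
  have h2 : Real.sqrt b * Real.sqrt b = b := Real.mul_self_sqrt hb
  have h3 : 0 ≤ (Real.sqrt b - Real.sqrt a)^2 := sq_nonneg _
  have key : Real.sqrt a + (b - a) / (2 * Real.sqrt a) = (a + b) / (2 * Real.sqrt a) := by
    field_simp
    nlinarith
  rw [key, le_div_iff₀ (by positivity)]
  nlinarith [Real.sqrt_nonneg b]

lemma sum_sqrt_le (s : Finset ℕ) (g : ℕ → ℝ) (hg : ∀ i ∈ s, 0 ≤ g i) :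
    ∑ i ∈ s, Real.sqrt (g i) ≤ Real.sqrt (s.card * ∑ i ∈ s, g i) := by
  have h := Finset.sum_mul_sq_le_sq_mul_sq s (fun _ => (1:ℝ)) (fun i => Real.sqrt (g i))
  simp only [one_mul, one_pow, Finset.sum_const, nsmul_eq_mul, mul_one] at h
  have h2 : ∑ i ∈ s, Real.sqrt (g i) ^ 2 = ∑ i ∈ s, g i := by
    apply Finset.sum_congr rfl; intro i hi; exact Real.sq_sqrt (hg i hi)
  rw [h2] at h
  have h0 : 0 ≤ ∑ i ∈ s, Real.sqrt (g i) :=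
    Finset.sum_nonneg fun i _ => Real.sqrt_nonneg _
  calc ∑ i ∈ s, Real.sqrt (g i) = Real.sqrt ((∑ i ∈ s, Real.sqrt (g i))^2) := by
        rw [Real.sqrt_sq h0]
    _ ≤ Real.sqrt (s.card * ∑ i ∈ s, g i) := Real.sqrt_le_sqrt h

lemma abel_le (lam d : ℕ → ℝ) (n : ℕ)
    (hlam : ∀ i j, 1 ≤ i → i ≤ j → j ≤ n+1 → lam i ≤ lam j)
    (hd : ∀ k, k ≤ n → 0 ≤ ∑ i ∈ Finset.Icc 1 k, d i) :
    ∑ i ∈ Finset.Icc 1 n, lam i * d i ≤ lam (n+1) * ∑ i ∈ Finset.Icc 1 n, d i := by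
  induction n with
  | zero => simp
  | succ n ih =>
    have ih' := ih (fun i j h1 h2 h3 => hlam i j h1 h2 (by omega))
      (fun k hk => hd k (by omega))
    rw [Finset.sum_Icc_succ_top (by omega), Finset.sum_Icc_succ_top (by omega)]
    have h1 : lam (n+1) * (∑ i ∈ Finset.Icc 1 n, d i + d (n+1))
        ≤ lam (n+2) * (∑ i ∈ Finset.Icc 1 n, d i + d (n+1)) := by
      apply mul_le_mul_of_nonneg_right (hlam (n+1) (n+2) (by omega) (by omega) (by omega))
      have := hd (n+1) (by omega)
      rwa [Finset.sum_Icc_succ_top (by omega)] at this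
    nlinarith [ih']


lemma lemmaA_core (w : ℕ → ℝ) (hmono : ∀ i j, 1 ≤ i → i ≤ j → w j ≤ w i) :
    ∀ (m : ℕ) (t : Finset ℕ), t.card = m → (∀ x ∈ t, 1 ≤ x) →
      ∑ i ∈ t, w i ≤ ∑ i ∈ Finset.Icc 1 m, w i := by
  intro m
  induction m with
  | zero => intro t ht _; rw [Finset.card_eq_zero] at ht; simp [ht]
  | succ m ih =>
    intro t ht hpos
    have hne : t.Nonempty := by rw [← Finset.card_pos, ht]; omega
    set a := t.max' hne with ha
    have hat : a ∈ t := t.max'_mem hne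
    have ha1 : 1 ≤ a := hpos a hat
    have hsub : t ⊆ Finset.Icc 1 a := by
      intro x hx
      exact Finset.mem_Icc.2 ⟨hpos x hx, t.le_max' x hx⟩
    have hcard : m + 1 ≤ a := by
      have := Finset.card_le_card hsub
      rw [ht, Nat.card_Icc] at this
      omega
    have herase : (t.erase a).card = m := by rw [Finset.card_erase_of_mem hat, ht]; omega
    have hih := ih (t.erase a) herase (fun x hx => hpos x (Finset.mem_of_mem_erase hx))
    have hsplit : ∑ i ∈ t, w i = ∑ i ∈ t.erase a, w i + w a :=
      (Finset.sum_erase_add t w hat).symm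
    rw [hsplit, Finset.sum_Icc_succ_top (by omega)]
    have : w a ≤ w (m+1) := hmono (m+1) a (by omega) hcard
    linarith

lemma lemmaA (w : ℕ → ℝ) (hw0 : w 0 = 0)
    (hmono : ∀ i j, 1 ≤ i → i ≤ j → w j ≤ w i)
    (h0 : ∀ i, 1 ≤ i → 0 ≤ w i)
    (k : ℕ) (t : Finset ℕ) (htk : t.card ≤ k) :
    ∑ i ∈ t, w i ≤ ∑ i ∈ Finset.Icc 1 k, w i := by
  have h1 : ∑ i ∈ t.erase 0, w i = ∑ i ∈ t, w i := Finset.sum_erase t hw0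
  have h2 : (t.erase 0).card ≤ k := le_trans (Finset.card_le_card (Finset.erase_subset 0 t)) htk
  have h3 := lemmaA_core w hmono (t.erase 0).card (t.erase 0) rfl
    (fun x hx => Nat.one_le_iff_ne_zero.2 (Finset.ne_of_mem_erase hx))
  rw [h1] at h3
  refine le_trans h3 (Finset.sum_le_sum_of_subset_of_nonneg ?_ ?_)
  · exact Finset.Icc_subset_Icc_right h2
  · intro i hi _; exact h0 i (Finset.mem_Icc.1 hi).1


lemma exists_sorted (L : ℕ) (hL : 0 < L) (Q : ℕ → ℝ) (hQ0 : ∀ i, 0 ≤ Q i) :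
    ∃ q : ℕ → ℝ, (∀ i, 0 ≤ q i) ∧ (q 0 = 0) ∧
      (∀ i j, 1 ≤ i → i ≤ j → q j ≤ q i) ∧
      (∀ g : ℝ → ℝ, ∑ i ∈ Finset.Icc 1 L, g (q i) = ∑ i ∈ Finset.Icc 1 L, g (Q i)) ∧
      (∀ s : Finset ℕ, s ⊆ Finset.Icc 1 L →
        ∃ t : Finset ℕ, t.card = s.card ∧ ∑ x ∈ s, Q x = ∑ x ∈ t, q x) := by
  set f : Fin L → ℝ := fun j => Q (j.val + 1) with hf
  set σ : Equiv.Perm (Fin L) := Tuple.sort f with hσ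
  have mono : Monotone (f ∘ σ) := Tuple.monotone_sort f
  set ι : ℕ → Fin L := fun i => ⟨(L - i) % L, Nat.mod_lt _ hL⟩ with hι
  set ι' : ℕ → Fin L := fun i => ⟨(i - 1) % L, Nat.mod_lt _ hL⟩ with hι'
  set q : ℕ → ℝ := fun i => if 1 ≤ i ∧ i ≤ L then f (σ (ι i)) else 0 with hq
  have hqval : ∀ i, 1 ≤ i → i ≤ L → q i = f (σ (ι i)) := by
    intro i h1 h2; rw [hq]; simp only [if_pos (And.intro h1 h2)]
  refine ⟨q, ?_, ?_, ?_, ?_, ?_⟩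
  · intro i
    rw [hq]
    by_cases h : 1 ≤ i ∧ i ≤ L
    · simp only [if_pos h]; exact hQ0 _
    · simp only [if_neg h]; exact le_refl _
  · rw [hq]; norm_num
  · intro i j h1 hij
    by_cases hjL : j ≤ L
    · rw [hqval i h1 (le_trans hij hjL), hqval j (le_trans h1 hij) hjL]
      have : ι j ≤ ι i := by
        rw [hι]
        simp only [Fin.mk_le_mk]
        have e1 : (L - i) % L = L - i := Nat.mod_eq_of_lt (by omega)
        have e2 : (L - j) % L = L - j := Nat.mod_eq_of_lt (by omega)
        omega
      exact mono this
    · rw [hq]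
      simp only [if_neg (by omega : ¬(1 ≤ j ∧ j ≤ L))]
      by_cases h : 1 ≤ i ∧ i ≤ L
      · simp only [if_pos h]; exact hQ0 _
      · simp only [if_neg h]; exact le_refl _
  · intro g
    have step1 : ∑ i ∈ Finset.Icc 1 L, g (q i) = ∑ j : Fin L, g (f (σ j)) := by
      refine Finset.sum_nbij' ι (fun j : Fin L => L - j.val) ?_ ?_ ?_ ?_ ?_
      · intro a _; exact Finset.mem_univ _
      · intro j _
        have := j.isLt
        refine Finset.mem_Icc.2 ⟨?_, ?_⟩ <;> omega
      · intro a ha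
        have ha' := Finset.mem_Icc.1 ha
        rw [hι]; simp only
        have e1 : (L - a) % L = L - a := Nat.mod_eq_of_lt (by omega)
        omega
      · intro j _
        have := j.isLt
        rw [hι]
        apply Fin.ext
        simp only
        have e1 : (L - (L - j.val)) % L = j.val := by
          rw [Nat.sub_sub_self (by omega)]; exact Nat.mod_eq_of_lt j.isLt
        exact e1
      · intro a ha
        have ha' := Finset.mem_Icc.1 ha
        rw [hqval a ha'.1 ha'.2]
    have step2 : ∑ j : Fin L, g (f (σ j)) = ∑ j : Fin L, g (f j) :=
      Equiv.sum_comp σ (fun j => g (f j))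
    have step3 : ∑ j : Fin L, g (f j) = ∑ i ∈ Finset.Icc 1 L, g (Q i) := by
      refine Finset.sum_nbij' (fun j : Fin L => j.val + 1) ι' ?_ ?_ ?_ ?_ ?_
      · intro j _
        have := j.isLt
        refine Finset.mem_Icc.2 ⟨?_, ?_⟩ <;> omega
      · intro a _; exact Finset.mem_univ _
      · intro j _
        apply Fin.ext
        rw [hι']
        simp only [Nat.add_sub_cancel]
        exact Nat.mod_eq_of_lt j.isLt
      · intro a ha
        have ha' := Finset.mem_Icc.1 ha
        rw [hι']; simp only
        have : (a - 1) % L = a - 1 := Nat.mod_eq_of_lt (by omega)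
        omega
      · intro j _; rfl
    rw [step1, step2, step3]
  · intro s hs
    set φ : ℕ → ℕ := fun x => L - (σ.symm (ι' x)).val with hφ
    have hQq : ∀ x ∈ s, Q x = q (φ x) := by
      intro x hx
      have hx' := Finset.mem_Icc.1 (hs hx)
      have hlt := (σ.symm (ι' x)).isLt
      rw [hqval (φ x) (by rw [hφ]; simp only []; omega) (by rw [hφ]; simp only []; omega)]
      have : ι (φ x) = σ.symm (ι' x) := by
        apply Fin.ext
        rw [hι, hφ]
        simp only
        have : L - (L - (σ.symm (ι' x)).val) = (σ.symm (ι' x)).val := by omega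
        rw [this]
        exact Nat.mod_eq_of_lt hlt
      rw [this, Equiv.apply_symm_apply]
      rw [hι', hf]
      simp only
      have : (x - 1) % L = x - 1 := Nat.mod_eq_of_lt (by omega)
      rw [this]
      congr 1
      omega
    have hinj : Set.InjOn φ ↑s := by
      intro x hx y hy hxy
      have hx' := Finset.mem_Icc.1 (hs hx)
      have hy' := Finset.mem_Icc.1 (hs hy)
      have hltx := (σ.symm (ι' x)).isLt
      have hlty := (σ.symm (ι' y)).isLt
      rw [hφ] at hxy
      simp only at hxy
      have : σ.symm (ι' x) = σ.symm (ι' y) := by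
        apply Fin.ext; omega
      have h2 : ι' x = ι' y := σ.symm.injective this
      rw [hι'] at h2
      simp only [Fin.mk.injEq] at h2
      have e1 : (x - 1) % L = x - 1 := Nat.mod_eq_of_lt (by omega)
      have e2 : (y - 1) % L = y - 1 := Nat.mod_eq_of_lt (by omega)
      omega
    refine ⟨s.image φ, Finset.card_image_of_injOn hinj, ?_⟩
    rw [Finset.sum_image (fun x hx y hy h => hinj hx hy h)]
    exact Finset.sum_congr rfl hQq

lemma keyUB (L n : ℕ) (hn1 : 1 ≤ n) (hnL : n < L) (Pd q : ℕ → ℝ)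
    (hq0 : ∀ i, 0 ≤ q i)
    (hsort : ∀ i j, 1 ≤ i → i ≤ j → Pd j ≤ Pd i)
    (S : ℝ) (hS0 : 0 ≤ S)
    (hSsum : (∑ i ∈ Finset.Icc 1 n, Pd i) + S = 1)
    (hclt : S / ((L:ℝ) - n) < Pd n)
    (hqsum : ∑ i ∈ Finset.Icc 1 L, q i = 1)
    (hdom : ∀ k, k ≤ n → ∑ i ∈ Finset.Icc 1 k, Pd i ≤ ∑ i ∈ Finset.Icc 1 k, q i) :
    ∑ i ∈ Finset.Icc 1 L, Real.sqrt (q i) ≤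
      (∑ i ∈ Finset.Icc 1 n, Real.sqrt (Pd i)) + Real.sqrt (((L:ℝ) - n) * S) := by
  have hLn : (0:ℝ) < (L:ℝ) - (n:ℝ) := by
    have : (n:ℝ) < (L:ℝ) := by exact_mod_cast hnL
    linarith
  set c : ℝ := S / ((L:ℝ) - n) with hcdef
  have hc : ((L:ℝ) - n) * c = S := by rw [hcdef]; field_simp [hLn.ne']
  have hc0 : 0 ≤ c := div_nonneg hS0 hLn.le
  have hPdi : ∀ i, 1 ≤ i → i ≤ n → c < Pd i :=
    fun i h1 h2 => lt_of_lt_of_le hclt (hsort i n h1 h2)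
  have hPdpos : ∀ i, 1 ≤ i → i ≤ n → 0 < Pd i :=
    fun i h1 h2 => lt_of_le_of_lt hc0 (hPdi i h1 h2)
  set D : ℝ := (∑ i ∈ Finset.Icc 1 n, q i) - ∑ i ∈ Finset.Icc 1 n, Pd i with hDdef
  have hD0 : 0 ≤ D := by
    have := hdom n (le_refl n); rw [hDdef]; linarith
  set T : ℝ := ∑ i ∈ Finset.Ioc n L, q i with hTdef
  have hT0 : 0 ≤ T := Finset.sum_nonneg fun i _ => hq0 i
  have hsplit : ∀ g : ℕ → ℝ,
      ∑ i ∈ Finset.Icc 1 n, g i + ∑ i ∈ Finset.Ioc n L, g i = ∑ i ∈ Finset.Icc 1 L, g i := by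
    intro g
    rw [show Finset.Icc 1 n = Finset.Ioc 0 n from Finset.Icc_add_one_left_eq_Ioc 0 n,
      show Finset.Icc 1 L = Finset.Ioc 0 L from Finset.Icc_add_one_left_eq_Ioc 0 L]
    exact Finset.sum_Ioc_consecutive g (Nat.zero_le n) hnL.le
  have hTS : T = S - D := by
    have := hsplit q
    rw [hqsum] at this
    rw [hTdef, hDdef]; linarith
  have hDS : D ≤ S := by linarith
  -- Cauchy-Schwarz on the tail
  have stepCS : ∑ i ∈ Finset.Ioc n L, Real.sqrt (q i) ≤ Real.sqrt (((L:ℝ) - n) * T) := by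
    have h := sum_sqrt_le (Finset.Ioc n L) q (fun i _ => hq0 i)
    rwa [Nat.card_Ioc, Nat.cast_sub hnL.le] at h
  -- tangent line bounds on head
  set lam : ℕ → ℝ := fun i => if i ≤ n then 1/(2*Real.sqrt (Pd i))
    else (if 0 < S then 1/(2*Real.sqrt c) else 1/(2*Real.sqrt (Pd n))) with hlamdef
  have hlampos : ∀ i, 1 ≤ i → i ≤ n → lam i = 1/(2*Real.sqrt (Pd i)) := by
    intro i _ h2; rw [hlamdef]; simp only [if_pos h2]
  have stepTan : ∑ i ∈ Finset.Icc 1 n, Real.sqrt (q i) ≤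
      (∑ i ∈ Finset.Icc 1 n, Real.sqrt (Pd i)) +
        ∑ i ∈ Finset.Icc 1 n, lam i * (q i - Pd i) := by
    rw [← Finset.sum_add_distrib]
    apply Finset.sum_le_sum
    intro i hi
    obtain ⟨h1, h2⟩ := Finset.mem_Icc.1 hi
    have := sqrt_tangent (hPdpos i h1 h2) (hq0 i)
    rw [hlampos i h1 h2]
    calc Real.sqrt (q i) ≤ Real.sqrt (Pd i) + (q i - Pd i)/(2*Real.sqrt (Pd i)) := this
      _ = Real.sqrt (Pd i) + 1/(2*Real.sqrt (Pd i)) * (q i - Pd i) := by ring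
  have habel : ∑ i ∈ Finset.Icc 1 n, lam i * (q i - Pd i) ≤ lam (n+1) * D := by
    have h := abel_le lam (fun i => q i - Pd i) n ?_ ?_
    · rw [Finset.sum_sub_distrib] at h
      rw [hDdef]; exact h
    · intro i j h1 hij hj
      by_cases hjn : j ≤ n
      · rw [hlampos i h1 (le_trans hij hjn), hlampos j (le_trans h1 hij) hjn]
        have hpj := hPdpos j (le_trans h1 hij) hjn
        have hle : Pd j ≤ Pd i := hsort i j h1 hij
        apply one_div_le_one_div_of_le (by positivity)
        have : Real.sqrt (Pd j) ≤ Real.sqrt (Pd i) := Real.sqrt_le_sqrt hle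
        linarith
      · have hj' : j = n + 1 := by omega
        by_cases hin : i ≤ n
        case neg =>
          have hi' : i = n + 1 := by omega
          rw [hi', hj']
        case pos =>
        rw [hlampos i h1 hin, hj', hlamdef]
        simp only [if_neg (by omega : ¬ (n+1 ≤ n))]
        by_cases hS : 0 < S
        · rw [if_pos hS]
          have hcpos : 0 < c := div_pos hS hLn
          have hci : c ≤ Pd i := (hPdi i h1 hin).le
          apply one_div_le_one_div_of_le (by positivity)
          have : Real.sqrt c ≤ Real.sqrt (Pd i) := Real.sqrt_le_sqrt hci
          linarith
        · rw [if_neg hS]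
          have hpn := hPdpos n hn1 (le_refl n)
          apply one_div_le_one_div_of_le (by positivity)
          have : Real.sqrt (Pd n) ≤ Real.sqrt (Pd i) := Real.sqrt_le_sqrt (hsort i n h1 hin)
          linarith
    · intro k hk
      have := hdom k hk
      rw [Finset.sum_sub_distrib]
      linarith
  have step3 : Real.sqrt (((L:ℝ) - n) * T) ≤ Real.sqrt (((L:ℝ) - n) * S) - lam (n+1) * D := by
    have hlamtop : lam (n+1) = (if 0 < S then 1/(2*Real.sqrt c) else 1/(2*Real.sqrt (Pd n))) := by
      rw [hlamdef]; simp only [if_neg (by omega : ¬ (n+1 ≤ n))]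
    by_cases hS : 0 < S
    · have hcpos : 0 < c := div_pos hS hLn
      have hscpos : 0 < Real.sqrt c := Real.sqrt_pos.2 hcpos
      have ha : 0 < ((L:ℝ) - n) * S := by positivity
      have hb : 0 ≤ ((L:ℝ) - n) * T := by
        apply mul_nonneg hLn.le hT0
      have htan := sqrt_tangent ha hb
      have hsa : Real.sqrt (((L:ℝ) - n) * S) = ((L:ℝ) - n) * Real.sqrt c := by
        rw [← hc, show ((L:ℝ)-n) * (((L:ℝ)-n)*c) = (((L:ℝ)-n))^2 * c by ring,
          Real.sqrt_mul (by positivity), Real.sqrt_sq hLn.le]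
      have hba : ((L:ℝ) - n) * T - ((L:ℝ) - n) * S = -(((L:ℝ) - n) * D) := by
        rw [hTS]; ring
      rw [hlamtop, if_pos hS]
      have hLn0 : ((L:ℝ) - n) ≠ 0 := ne_of_gt hLn
      have hsc0 : Real.sqrt c ≠ 0 := ne_of_gt hscpos
      calc Real.sqrt (((L:ℝ)-n) * T)
          ≤ Real.sqrt (((L:ℝ)-n) * S) + (((L:ℝ)-n) * T - ((L:ℝ)-n) * S)/(2*Real.sqrt (((L:ℝ)-n)*S)) := htan
        _ = Real.sqrt (((L:ℝ)-n) * S) - 1/(2*Real.sqrt c) * D := by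
            rw [hba, hsa]
            field_simp
            ring
    · have hSz : S = 0 := le_antisymm (not_lt.1 hS) hS0
      have hDz : D = 0 := le_antisymm (by linarith) hD0
      have hTz : T = 0 := by rw [hTS, hSz, hDz]; ring
      rw [hSz, hTz, hDz]
      simp
  have hsq := hsplit (fun i => Real.sqrt (q i))
  linarith [stepCS, stepTan, habel, step3, hsq]

lemma sum_le_total (P : ℕ → ℝ) (N : ℕ) (h0 : ∀ i, 0 ≤ P i)
    (hsupp : ∀ i ∉ Finset.Icc 1 N, P i = 0) (s : Finset ℕ) :
    ∑ x ∈ s, P x ≤ ∑ x ∈ Finset.Icc 1 N, P x := by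
  have h1 : ∑ x ∈ s ∩ Finset.Icc 1 N, P x = ∑ x ∈ s, P x := by
    apply Finset.sum_subset Finset.inter_subset_left
    intro x hx hnx
    exact hsupp x (fun hmem => hnx (Finset.mem_inter.2 ⟨hx, hmem⟩))
  rw [← h1]
  exact Finset.sum_le_sum_of_subset_of_nonneg Finset.inter_subset_right
    (fun i _ _ => h0 i)


/-- The sum of the `l` largest values of a finitely supported `P : ℕ → ℝ`. -/
noncomputable def maxSumN (P : ℕ → ℝ) (l : ℕ) : ℝ :=
  sSup {r | ∃ s : Finset ℕ, s.card ≤ l ∧ r = ∑ x ∈ s, P x}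

/-- `P ≺ Q` : `P` is majorized by `Q`. -/
def MajorizedN (P Q : ℕ → ℝ) : Prop :=
  ∀ l : ℕ, maxSumN P l ≤ maxSumN Q l

/-- The index `J_{P,L}` from the statement, for a decreasingly sorted distribution `Pd`
supported on `{1,...,M}`. -/
noncomputable def Jlevel (Pd : ℕ → ℝ) (M L : ℕ) : ℕ :=
  max 1 (((Finset.Icc 2 L).filter
    (fun j => (∑ i ∈ Finset.Icc j M, Pd i) / ((L : ℝ) + 1 - j) < Pd (j - 1))).sup id)

lemma maxSumN_le (P : ℕ → ℝ) (l : ℕ) (B : ℝ)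
    (hB : ∀ s : Finset ℕ, s.card ≤ l → ∑ x ∈ s, P x ≤ B) : maxSumN P l ≤ B := by
  apply csSup_le
  · exact ⟨0, ∅, by simp, by simp⟩
  · rintro r ⟨s, hs, rfl⟩
    exact hB s hs

lemma le_maxSumN (P : ℕ → ℝ) (l : ℕ) (B : ℝ)
    (hB : ∀ s : Finset ℕ, ∑ x ∈ s, P x ≤ B)
    (s : Finset ℕ) (hs : s.card ≤ l) : ∑ x ∈ s, P x ≤ maxSumN P l := by
  apply le_csSup
  · refine ⟨B, ?_⟩
    rintro r ⟨t, _, rfl⟩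
    exact hB t
  · exact ⟨s, hs, rfl⟩


set_option maxHeartbeats 2000000 in
theorem stmt17 (M L : ℕ) (hM : 0 < M) (hL : 0 < L)
    (P : ℕ → ℝ) (hP0 : ∀ i, 0 ≤ P i)
    (hPsupp : ∀ i ∉ Finset.Icc 1 M, P i = 0)
    (hP1 : ∑ i ∈ Finset.Icc 1 M, P i = 1)
    (Pd : ℕ → ℝ) (e : Equiv.Perm ℕ) (hPe : ∀ i, Pd i = P (e i))
    (hPdsupp : ∀ i ∉ Finset.Icc 1 M, Pd i = 0)
    (hsort : ∀ i j : ℕ, 1 ≤ i → i ≤ j → Pd j ≤ Pd i) :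
    IsGreatest
      {r | ∃ P' : ℕ → ℝ, (∀ i, 0 ≤ P' i) ∧ (∀ i ∉ Finset.Icc 1 L, P' i = 0) ∧
        (∑ i ∈ Finset.Icc 1 L, P' i = 1) ∧ MajorizedN P P' ∧
        r = ∑ i ∈ Finset.Icc 1 L, Real.sqrt (P' i * (L : ℝ)⁻¹)}
      (Real.sqrt ((L : ℝ)⁻¹) *
        ((∑ j ∈ Finset.Icc 1 (Jlevel Pd M L - 1), Real.sqrt (Pd j)) +
          Real.sqrt (((L : ℝ) + 1 - (Jlevel Pd M L : ℝ)) *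
            ∑ i ∈ Finset.Icc (Jlevel Pd M L) M, Pd i))) := by
  have hPd0 : ∀ i, 0 ≤ Pd i := fun i => (hPe i) ▸ hP0 (e i)
  have hPd00 : Pd 0 = 0 := hPdsupp 0 (by simp)
  -- total sum of Pd is 1
  have hrearr : ∀ s : Finset ℕ, ∑ x ∈ s, P x = ∑ i ∈ s.image e.symm, Pd i := by
    intro s
    rw [Finset.sum_image (fun x _ y _ h => e.symm.injective h)]
    apply Finset.sum_congr rfl
    intro x _
    rw [hPe, Equiv.apply_symm_apply]
  have hPdsum : ∑ i ∈ Finset.Icc 1 M, Pd i = 1 := by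
    have h1 : ∑ i ∈ Finset.Icc 1 M, Pd i = ∑ x ∈ (Finset.Icc 1 M).image e, P x := by
      rw [Finset.sum_image (fun x _ y _ h => e.injective h)]
      exact Finset.sum_congr rfl (fun i _ => hPe i)
    have h2 : ∑ x ∈ (Finset.Icc 1 M).image e, P x
        = ∑ x ∈ (Finset.Icc 1 M).image e ∪ Finset.Icc 1 M, P x := by
      apply Finset.sum_subset Finset.subset_union_left
      intro x _ hnx
      have he : e.symm x ∉ Finset.Icc 1 M := by
        intro hmem
        exact hnx (Finset.mem_image.2 ⟨e.symm x, hmem, Equiv.apply_symm_apply e x⟩)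
      have := hPdsupp _ he
      rwa [hPe, Equiv.apply_symm_apply] at this
    have h3 : ∑ x ∈ Finset.Icc 1 M, P x
        = ∑ x ∈ (Finset.Icc 1 M).image e ∪ Finset.Icc 1 M, P x := by
      apply Finset.sum_subset Finset.subset_union_right
      intro x _ hnx
      exact hPsupp x hnx
    rw [h1, h2, ← h3, hP1]
  -- bounds for maxSumN P
  have hPdtot : ∀ s : Finset ℕ, ∑ x ∈ s, Pd x ≤ 1 := by
    intro s
    rw [← hPdsum]
    exact sum_le_total Pd M hPd0 hPdsupp s
  have hPup : ∀ k, maxSumN P k ≤ ∑ i ∈ Finset.Icc 1 k, Pd i := by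
    intro k
    apply maxSumN_le
    intro s hs
    rw [hrearr s]
    apply lemmaA Pd hPd00 hsort (fun i _ => hPd0 i) k
    exact le_trans (Finset.card_image_le) hs
  have hPlow : ∀ k, ∑ i ∈ Finset.Icc 1 k, Pd i ≤ maxSumN P k := by
    intro k
    have hwit : ∑ x ∈ (Finset.Icc 1 k).image e, P x = ∑ i ∈ Finset.Icc 1 k, Pd i := by
      rw [Finset.sum_image (fun x _ y _ h => e.injective h)]
      exact Finset.sum_congr rfl (fun i _ => (hPe i).symm)
    rw [← hwit]
    apply le_maxSumN P k 1
    · intro s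
      rw [← hP1]
      exact sum_le_total P M hP0 hPsupp s
    · rw [Finset.card_image_of_injective _ e.injective, Nat.card_Icc]
      omega
  -- facts about J
  set F := ((Finset.Icc 2 L).filter
    (fun j => (∑ i ∈ Finset.Icc j M, Pd i) / ((L : ℝ) + 1 - j) < Pd (j - 1))) with hF
  set J := Jlevel Pd M L with hJ
  have hJdef : J = max 1 (F.sup id) := rfl
  have hJ1 : 1 ≤ J := le_max_left _ _
  have hsupL : F.sup id ≤ L := by
    apply Finset.sup_le
    intro b hb
    have := Finset.mem_Icc.1 (Finset.mem_filter.1 hb).1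
    exact this.2
  have hJL : J ≤ L := by rw [hJdef]; omega
  have hJmem : 2 ≤ J → J ∈ F := by
    intro h2
    have hsup : F.sup id = J := by rw [hJdef]; omega
    have hne : F.Nonempty := by
      by_contra hn
      rw [Finset.not_nonempty_iff_eq_empty] at hn
      rw [hn, Finset.sup_empty] at hsup
      simp at hsup
      omega
    obtain ⟨b, hb, hbe⟩ := Finset.exists_mem_eq_sup F hne id
    rw [hsup] at hbe
    rw [hbe]; exact hb
  have hnotmem : ∀ j, J < j → j ≤ L →
      Pd (j-1) ≤ (∑ i ∈ Finset.Icc j M, Pd i) / ((L : ℝ) + 1 - j) := by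
    intro j hj hjL
    by_contra hcon
    push_neg at hcon
    have hmem : j ∈ F := Finset.mem_filter.2 ⟨Finset.mem_Icc.2 ⟨by omega, hjL⟩, hcon⟩
    have := Finset.le_sup (f := id) hmem
    simp only [id] at this
    omega
  have hJM : J ≤ M + 1 := by
    by_contra hcon
    push_neg at hcon
    have hmem := hJmem (by omega)
    have hclt := (Finset.mem_filter.1 hmem).2
    have hempty : Finset.Icc J M = ∅ := Finset.Icc_eq_empty (by omega)
    rw [hempty, Finset.sum_empty, zero_div] at hclt
    have : Pd (J - 1) = 0 := hPdsupp _ (by simp [Finset.mem_Icc]; omega)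
    rw [this] at hclt
    exact lt_irrefl 0 hclt
  -- tail sums
  set n := J - 1 with hn
  have hJn : J = n + 1 := by omega
  have hnM : n ≤ M := by omega
  have hnL : n < L := by omega
  set g : ℕ → ℝ := fun j => ∑ i ∈ Finset.Icc j M, Pd i with hg
  have hg0 : ∀ j, 0 ≤ g j := fun j => Finset.sum_nonneg fun i _ => hPd0 i
  have hrec : ∀ j, 1 ≤ j → g j = Pd j + g (j+1) := by
    intro j hj
    by_cases hjM : j ≤ M
    · rw [hg]
      simp only
      rw [← Finset.Ioc_insert_left hjM, Finset.sum_insert (by simp), Finset.Icc_add_one_left_eq_Ioc]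
    · rw [hg]
      simp only
      rw [Finset.Icc_eq_empty (by omega), Finset.Icc_eq_empty (by omega),
        Finset.sum_empty, hPdsupp j (by simp only [Finset.mem_Icc]; omega)]
      ring
  have htel : ∀ k, J - 1 ≤ k → ∑ i ∈ Finset.Icc J k, Pd i = g J - g (k+1) := by
    intro k hk
    refine Nat.le_induction ?_ ?_ k hk
    · rw [Finset.Icc_eq_empty (by omega), Finset.sum_empty]
      have : J - 1 + 1 = J := by omega
      rw [this, sub_self]
    · intro k hk ih
      rw [Finset.sum_Icc_succ_top (by omega), ih, hrec (k+1) (by omega)]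
      ring
  have havg : ∀ j, J ≤ j → j ≤ L →
      ((L:ℝ) + 1 - j) * g J ≤ ((L:ℝ) + 1 - J) * g j := by
    intro j hj
    refine Nat.le_induction ?_ ?_ j hj
    · intro _; exact le_refl _
    · intro j hj ih hjL1
      have ih' := ih (by omega)
      have hx : (1:ℝ) ≤ (L:ℝ) - j := by
        have : (j:ℝ) + 1 ≤ (L:ℝ) := by exact_mod_cast hjL1
        linarith
      have hK : (L:ℝ) + 1 - (j:ℝ) ≤ (L:ℝ) + 1 - (J:ℝ) := by
        have : (J:ℝ) ≤ (j:ℝ) := by exact_mod_cast hj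
        linarith
      have hnm := hnotmem (j+1) (by omega) hjL1
      push_cast at hnm
      rw [le_div_iff₀ (by linarith)] at hnm
      have hnm' : Pd j * ((L:ℝ) - (j:ℝ)) ≤ g (j+1) := by
        have hgj : g (j+1) = ∑ i ∈ Finset.Icc (j+1) M, Pd i := rfl
        rw [hgj]
        nlinarith [hnm]
      have hgrec := hrec j (by omega)
      rw [hgrec] at ih'
      push_cast
      have p1 := mul_le_mul_of_nonneg_left ih' (by linarith : (0:ℝ) ≤ (L:ℝ) - (j:ℝ))
      have p2 := mul_le_mul_of_nonneg_left hnm' (by linarith : (0:ℝ) ≤ (L:ℝ) + 1 - (J:ℝ))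
      have hfin : ((L:ℝ) - j + 1) * (((L:ℝ) - j) * g J)
          ≤ ((L:ℝ) - j + 1) * (((L:ℝ) + 1 - J) * g (j+1)) := by
        nlinarith [p1, p2, hg0 (j+1), hg0 J, hPd0 j]
      have := le_of_mul_le_mul_left hfin (by linarith)
      nlinarith [this]
  have hLJcast : (L:ℝ) + 1 - (J:ℝ) = (L:ℝ) - (n:ℝ) := by rw [hJn]; push_cast; ring
  have hLn : (0:ℝ) < (L:ℝ) - (n:ℝ) := by
    have : (n:ℝ) < (L:ℝ) := by exact_mod_cast hnL
    linarith
  set c := g J / ((L:ℝ) - (n:ℝ)) with hc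
  have hcmul : ((L:ℝ) - (n:ℝ)) * c = g J := by rw [hc]; field_simp [hLn.ne']
  have hc0 : 0 ≤ c := div_nonneg (hg0 J) hLn.le
  have hkey : ∀ k, J ≤ k → k ≤ L →
      ∑ i ∈ Finset.Icc J k, Pd i ≤ ((k:ℝ) + 1 - (J:ℝ)) * c := by
    intro k hk hkL
    rw [htel k (by omega)]
    have hktarget : ((L:ℝ) - (k:ℝ)) * c ≤ g (k+1) := by
      by_cases hkL' : k = L
      · subst hkL'
        rw [sub_self, zero_mul]
        exact hg0 _
      · have h2 := havg (k+1) (by omega) (by omega)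
        push_cast at h2
        have hfin : ((L:ℝ) - (n:ℝ)) * (((L:ℝ) - (k:ℝ)) * c)
            ≤ ((L:ℝ) - (n:ℝ)) * g (k+1) := by
          rw [hLJcast, ← hcmul] at h2
          nlinarith [h2]
        exact le_of_mul_le_mul_left hfin hLn
    have hkcast : (k:ℝ) + 1 - (J:ℝ) = (k:ℝ) - (n:ℝ) := by rw [hJn]; push_cast; ring
    rw [hkcast, ← hcmul]
    nlinarith [hktarget]
  have hgJdef : g J = ∑ i ∈ Finset.Icc J M, Pd i := rfl
  -- the optimal target distribution
  set Pstar : ℕ → ℝ := fun i =>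
    if i ∈ Finset.Icc 1 n then Pd i else if i ∈ Finset.Icc 1 L then c else 0 with hPstar
  have hPstar0 : ∀ i, 0 ≤ Pstar i := by
    intro i
    rw [hPstar]
    simp only
    split_ifs
    · exact hPd0 i
    · exact hc0
    · exact le_refl 0
  have hPstar_supp : ∀ i ∉ Finset.Icc 1 L, Pstar i = 0 := by
    intro i hi
    rw [hPstar]
    simp only
    rw [if_neg, if_neg hi]
    intro hmem
    obtain ⟨w1, w2⟩ := Finset.mem_Icc.1 hmem
    exact hi (Finset.mem_Icc.2 ⟨w1, by omega⟩)
  have hsplitIcc : ∀ (k : ℕ) (f : ℕ → ℝ), n ≤ k →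
      ∑ i ∈ Finset.Icc 1 n, f i + ∑ i ∈ Finset.Ioc n k, f i = ∑ i ∈ Finset.Icc 1 k, f i := by
    intro k f hk
    rw [show Finset.Icc 1 n = Finset.Ioc 0 n from Finset.Icc_add_one_left_eq_Ioc 0 n,
      show Finset.Icc 1 k = Finset.Ioc 0 k from Finset.Icc_add_one_left_eq_Ioc 0 k]
    exact Finset.sum_Ioc_consecutive f (Nat.zero_le n) hk
  have hstar_head : ∀ i ∈ Finset.Icc 1 n, Pstar i = Pd i := by
    intro i hi
    rw [hPstar]
    simp only [if_pos hi]
  have hstar_tail : ∀ i ∈ Finset.Ioc n L, Pstar i = c := by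
    intro i hi
    obtain ⟨h1, h2⟩ := Finset.mem_Ioc.1 hi
    rw [hPstar]
    simp only
    rw [if_neg, if_pos (Finset.mem_Icc.2 ⟨by omega, h2⟩)]
    simp only [Finset.mem_Icc]
    omega
  have hsum1n : ∑ i ∈ Finset.Icc 1 n, Pd i + g (n+1) = 1 := by
    have hs := hsplitIcc M Pd hnM
    rw [hPdsum] at hs
    have hgn : g (n+1) = ∑ i ∈ Finset.Ioc n M, Pd i := by
      rw [show g (n+1) = ∑ i ∈ Finset.Icc (n+1) M, Pd i from rfl, Finset.Icc_add_one_left_eq_Ioc]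
    rw [hgn]
    linarith
  have hstar_tail_sum : ∀ k, n ≤ k → k ≤ L →
      ∑ i ∈ Finset.Ioc n k, Pstar i = ((k:ℝ) - (n:ℝ)) * c := by
    intro k h1 h2
    rw [Finset.sum_congr rfl (fun i hi => hstar_tail i
      (Finset.Ioc_subset_Ioc_right h2 hi)), Finset.sum_const, Nat.card_Ioc,
      nsmul_eq_mul, Nat.cast_sub h1]
  have hstar_sum : ∀ k, n ≤ k → k ≤ L → ∑ i ∈ Finset.Icc 1 k, Pstar i
      = ∑ i ∈ Finset.Icc 1 n, Pd i + ((k:ℝ) - (n:ℝ)) * c := by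
    intro k h1 h2
    rw [← hsplitIcc k Pstar h1, hstar_tail_sum k h1 h2,
      Finset.sum_congr rfl hstar_head]
  have hgJ_gn : g J = g (n+1) := by rw [hJn]
  have hstar_total : ∑ i ∈ Finset.Icc 1 L, Pstar i = 1 := by
    rw [hstar_sum L (by omega) (le_refl L), hcmul, hgJ_gn]
    exact hsum1n
  have hmaj : MajorizedN P Pstar := by
    intro k
    have h1 := hPup k
    have h2 : ∑ i ∈ Finset.Icc 1 k, Pd i ≤ ∑ i ∈ Finset.Icc 1 (min k L), Pstar i := by
      by_cases hk1 : k ≤ n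
      · rw [min_eq_left (by omega)]
        rw [Finset.sum_congr rfl (fun i hi => hstar_head i
          (Finset.Icc_subset_Icc_right (by omega) hi))]
      · by_cases hk2 : k ≤ L
        · rw [min_eq_left hk2, hstar_sum k (by omega) hk2]
          have hk3 := hkey k (by omega) hk2
          have hIoc : Finset.Ioc n k = Finset.Icc J k := by
            rw [hJn, Finset.Icc_add_one_left_eq_Ioc]
          have hsplit2 := hsplitIcc k Pd (by omega)
          have hkcast : (k:ℝ) + 1 - (J:ℝ) = (k:ℝ) - (n:ℝ) := by
            rw [hJn]; push_cast; ring
          rw [hkcast] at hk3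
          rw [← hsplit2, hIoc]
          linarith
        · rw [min_eq_right (by omega), hstar_total]
          exact hPdtot _
    have h3 : ∑ i ∈ Finset.Icc 1 (min k L), Pstar i ≤ maxSumN Pstar k := by
      apply le_maxSumN Pstar k 1
      · intro s
        rw [← hstar_total]
        exact sum_le_total Pstar L hPstar0 hPstar_supp s
      · rw [Nat.card_Icc]
        omega
    linarith
  have hval : ∑ i ∈ Finset.Icc 1 L, Real.sqrt (Pstar i * (L:ℝ)⁻¹)
      = Real.sqrt ((L:ℝ)⁻¹) *
        ((∑ j ∈ Finset.Icc 1 n, Real.sqrt (Pd j)) + Real.sqrt (((L:ℝ) - (n:ℝ)) * g J)) := by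
    rw [← hsplitIcc L (fun i => Real.sqrt (Pstar i * (L:ℝ)⁻¹)) (by omega)]
    have e1 : ∑ i ∈ Finset.Icc 1 n, Real.sqrt (Pstar i * (L:ℝ)⁻¹)
        = ∑ i ∈ Finset.Icc 1 n, Real.sqrt (Pd i) * Real.sqrt ((L:ℝ)⁻¹) := by
      apply Finset.sum_congr rfl
      intro i hi
      rw [hstar_head i hi, Real.sqrt_mul (hPd0 i)]
    have e2 : ∑ i ∈ Finset.Ioc n L, Real.sqrt (Pstar i * (L:ℝ)⁻¹)
        = (((L:ℝ) - (n:ℝ)) * Real.sqrt c) * Real.sqrt ((L:ℝ)⁻¹) := by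
      rw [Finset.sum_congr rfl (fun i hi => by rw [hstar_tail i hi, Real.sqrt_mul hc0]),
        Finset.sum_const, Nat.card_Ioc, nsmul_eq_mul, Nat.cast_sub (le_of_lt hnL)]
      ring
    rw [e1, e2, ← Finset.sum_mul]
    have e3 : ((L:ℝ) - (n:ℝ)) * Real.sqrt c = Real.sqrt (((L:ℝ) - (n:ℝ)) * g J) := by
      rw [← hcmul, show ((L:ℝ)-(n:ℝ)) * (((L:ℝ)-(n:ℝ))*c) = ((L:ℝ)-(n:ℝ))^2 * c by ring,
        Real.sqrt_mul (by positivity), Real.sqrt_sq hLn.le]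
    rw [e3]
    ring
  constructor
  · refine ⟨Pstar, hPstar0, hPstar_supp, hstar_total, hmaj, ?_⟩
    rw [hval, hLJcast, hgJdef]
  · rintro r ⟨Q, hQ0, hQsupp, hQ1, hQmaj, rfl⟩
    obtain ⟨q, hq0, hq00, hqsort, hqsum, hqpart⟩ := exists_sorted L hL Q hQ0
    have hqup : ∀ k, maxSumN Q k ≤ ∑ i ∈ Finset.Icc 1 k, q i := by
      intro k
      apply maxSumN_le
      intro s hs
      have h1 : ∑ x ∈ s, Q x = ∑ x ∈ s ∩ Finset.Icc 1 L, Q x := by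
        apply (Finset.sum_subset Finset.inter_subset_left ?_).symm
        intro x hx hnx
        exact hQsupp x (fun hmem => hnx (Finset.mem_inter.2 ⟨hx, hmem⟩))
      obtain ⟨t, htcard, htsum⟩ := hqpart (s ∩ Finset.Icc 1 L) Finset.inter_subset_right
      rw [h1, htsum]
      apply lemmaA q hq00 hqsort (fun i _ => hq0 i) k
      rw [htcard]
      exact le_trans (Finset.card_le_card Finset.inter_subset_left) hs
    have hdom : ∀ k, ∑ i ∈ Finset.Icc 1 k, Pd i ≤ ∑ i ∈ Finset.Icc 1 k, q i :=
      fun k => le_trans (hPlow k) (le_trans (hQmaj k) (hqup k))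
    have hq1 : ∑ i ∈ Finset.Icc 1 L, q i = 1 := by
      have hid := hqsum (fun x => x)
      rw [hid]
      exact hQ1
    have hrw : ∑ i ∈ Finset.Icc 1 L, Real.sqrt (Q i * (L:ℝ)⁻¹)
        = Real.sqrt ((L:ℝ)⁻¹) * ∑ i ∈ Finset.Icc 1 L, Real.sqrt (q i) := by
      rw [← hqsum (fun x => Real.sqrt (x * (L:ℝ)⁻¹)), Finset.mul_sum]
      apply Finset.sum_congr rfl
      intro i _
      rw [Real.sqrt_mul (hq0 i)]
      ring
    have main : ∑ i ∈ Finset.Icc 1 L, Real.sqrt (q i)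
        ≤ (∑ i ∈ Finset.Icc 1 n, Real.sqrt (Pd i)) + Real.sqrt (((L:ℝ) - (n:ℝ)) * g J) := by
      by_cases hn0 : n = 0
      · have hgJ1 : g J = 1 := by
          rw [hgJ_gn, hn0]
          have := hsum1n
          rw [hn0] at this
          simpa using this
        have hCS := sum_sqrt_le (Finset.Icc 1 L) q (fun i _ => hq0 i)
        rw [hq1, Nat.card_Icc] at hCS
        rw [hn0, hgJ1]
        simp only [Finset.Icc_self, Nat.cast_zero, sub_zero, mul_one]
        calc ∑ i ∈ Finset.Icc 1 L, Real.sqrt (q i)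
            ≤ Real.sqrt ((↑(L + 1 - 1)) * 1) := hCS
          _ = Real.sqrt (L:ℝ) := by norm_num
          _ ≤ 0 + Real.sqrt (L:ℝ) := by linarith
          _ = (∑ i ∈ Finset.Icc 1 0, Real.sqrt (Pd i)) + Real.sqrt (L:ℝ) := by
              simp
      · apply keyUB L n (by omega) hnL Pd q hq0 hsort (g J) (hg0 J) ?_ ?_ hq1
          (fun k _ => hdom k)
        · rw [hgJ_gn]
          exact hsum1n
        · have hmem := hJmem (by omega)
          have hlt := (Finset.mem_filter.1 hmem).2
          rw [← hgJdef] at hlt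
          rw [hLJcast] at hlt
          rwa [← hn] at hlt
    rw [hrw, hLJcast, hgJdef] at *
    calc Real.sqrt ((L:ℝ)⁻¹) * ∑ i ∈ Finset.Icc 1 L, Real.sqrt (q i)
        ≤ Real.sqrt ((L:ℝ)⁻¹) *
          ((∑ i ∈ Finset.Icc 1 n, Real.sqrt (Pd i)) +
            Real.sqrt (((L:ℝ) - (n:ℝ)) * ∑ i ∈ Finset.Icc J M, Pd i)) := by
          apply mul_le_mul_of_nonneg_left _ (Real.sqrt_nonneg _)
          exact main
      _ = _ := rfl
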